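/- For every element l of the free Lie algebra L ⊂ ℝ⟨x,y⟩, one has ∂_x(l) = ad_{∂_x^L(l)}(1⊗1), i.e., the full noncommutative partial derivative of a Lie element is obtained by the adjoint action of ∂_x^L(l) on 1⊗1 in the bimodule A⊗A. -/

import Mathlib

noncomputable section
open TensorProduct

abbrev A : Type := FreeAlgebra ℝ (Fin 2)
abbrev B : Type := A ⊗[ℝ] A

def X : A := FreeAlgebra.ι ℝ 0
def Y : A := FreeAlgebra.ι ℝ 1

/-- Generator matrices used to define the noncommutative partial derivative `pd d`. -/
def genMat (d i : Fin 2) : Matrix (Fin 2) (Fin 2) B :=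
  !![(Algebra.TensorProduct.includeLeft : A →ₐ[ℝ] B) (FreeAlgebra.ι ℝ i), if i = d then 1 else 0;
     0, Algebra.TensorProduct.includeRight (FreeAlgebra.ι ℝ i)]

def Φmat (d : Fin 2) : A →ₐ[ℝ] Matrix (Fin 2) (Fin 2) B :=
  FreeAlgebra.lift ℝ (genMat d)

/-- The noncommutative partial derivative `∂_x` (for `d = 0`) resp. `∂_y` (for `d = 1`):
on a monomial it splits the word at each occurrence of the letter `d`. -/
def pd (d : Fin 2) (a : A) : B := Φmat d a 0 1

/-- The counit `ε : A → ℝ`, picking out the constant term (`x, y ↦ 0`). -/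
def εR : A →ₐ[ℝ] ℝ := FreeAlgebra.lift ℝ (fun _ => (0 : ℝ))

/-- The Lie partial derivative `∂^L = (id ⊗ ε) ∘ ∂ : A → A`. -/
def pdL (d : Fin 2) (a : A) : A :=
  TensorProduct.rid ℝ A (LinearMap.lTensor A εR.toLinearMap (pd d a))

attribute [local instance 100] LieRing.ofAssociativeRing

/-- The free Lie algebra `L ⊂ A`: the smallest Lie subalgebra of `A` (with bracket
`[a,b] = ab − ba`) containing `x` and `y`. -/
def L : LieSubalgebra ℝ A := LieSubalgebra.lieSpan ℝ A {X, Y}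

/-- The adjoint action of `A` on the bimodule `A ⊗ A`, defined on generators by
`ad_z(m) = z·m − m·z` (i.e. `(z⊗1)·m − m·(1⊗z)`) and extended by `ad_{za} = ad_z ∘ ad_a`
and linearity; formally, the algebra map `A → End(A ⊗ A)` sending a generator `z` to
left multiplication by `z⊗1` minus right multiplication by `1⊗z`. -/
def adA : A →ₐ[ℝ] Module.End ℝ B :=
  FreeAlgebra.lift ℝ (fun i =>
    LinearMap.mulLeft ℝ ((Algebra.TensorProduct.includeLeft : A →ₐ[ℝ] B) (FreeAlgebra.ι ℝ i))
      - LinearMap.mulRight ℝ (Algebra.TensorProduct.includeRight (FreeAlgebra.ι ℝ i)))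

-- abbreviations
local notation "incL" => (Algebra.TensorProduct.includeLeft : A →ₐ[ℝ] B)
local notation "incR" => (Algebra.TensorProduct.includeRight : A →ₐ[ℝ] B)

lemma tri (d : Fin 2) (a : A) :
    Φmat d a 1 0 = 0 ∧ Φmat d a 0 0 = incL a ∧ Φmat d a 1 1 = incR a := by
  induction a using FreeAlgebra.induction with
  | grade0 r =>
      refine ⟨?_, ?_, ?_⟩ <;>
        simp [Φmat, Matrix.algebraMap_matrix_apply, Algebra.algebraMap_eq_smul_one,
          Algebra.TensorProduct.one_def]
  | grade1 i =>
      refine ⟨?_, ?_, ?_⟩ <;> simp [Φmat, genMat]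
  | mul a b ha hb =>
      obtain ⟨ha0, haL, haR⟩ := ha
      obtain ⟨hb0, hbL, hbR⟩ := hb
      refine ⟨?_, ?_, ?_⟩ <;>
        simp [map_mul, Matrix.mul_apply, Fin.sum_univ_two, ha0, haL, haR, hb0, hbL, hbR]
  | add a b ha hb =>
      obtain ⟨ha0, haL, haR⟩ := ha
      obtain ⟨hb0, hbL, hbR⟩ := hb
      refine ⟨?_, ?_, ?_⟩ <;> simp [map_add, ha0, haL, haR, hb0, hbL, hbR]

lemma pd_mul (d : Fin 2) (a b : A) :
    pd d (a * b) = incL a * pd d b + pd d a * incR b := by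
  have ha := tri d a
  have hb := tri d b
  simp [pd, map_mul, Matrix.mul_apply, Fin.sum_univ_two, ha.2.1, hb.1, hb.2.2]

def F : B →ₗ[ℝ] A :=
  (TensorProduct.rid ℝ A).toLinearMap ∘ₗ LinearMap.lTensor A εR.toLinearMap

lemma pdL_eq (d : Fin 2) (a : A) : pdL d a = F (pd d a) := rfl

lemma F_left (a : A) (m : B) : F (incL a * m) = a * F m := by
  induction m using TensorProduct.induction_on with
  | zero => simp
  | tmul u v => simp [F, Algebra.TensorProduct.includeLeft_apply,
      Algebra.TensorProduct.tmul_mul_tmul, mul_smul_comm, mul_assoc]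
  | add u v hu hv => rw [mul_add, map_add, hu, hv, map_add, mul_add]

lemma F_right (b : A) (m : B) : F (m * incR b) = εR b • F m := by
  induction m using TensorProduct.induction_on with
  | zero => simp
  | tmul u v => simp [F, Algebra.TensorProduct.includeRight_apply,
      Algebra.TensorProduct.tmul_mul_tmul, mul_comm, smul_smul]
  | add u v hu hv => rw [add_mul, map_add, hu, hv, map_add, smul_add]

lemma pdL_mul (d : Fin 2) (a b : A) :
    pdL d (a * b) = a * pdL d b + εR b • pdL d a := by
  rw [pdL_eq, pd_mul, map_add, F_left, F_right, pdL_eq, pdL_eq]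

lemma eps_lie {l : A} (hl : l ∈ L) : εR l = 0 := by
  have hl' : l ∈ LieSubalgebra.lieSpan ℝ A {X, Y} := hl
  refine LieSubalgebra.lieSpan_induction (R := ℝ) (p := fun x _ => εR x = 0) (hx := hl')
    ?_ ?_ ?_ ?_ ?_
  · rintro x (h | h) <;> subst h <;> simp [X, Y, εR]
  · simp
  · intro x y _ _ hx hy; simp [hx, hy]
  · intro r x _ hx; simp [hx]
  · intro x y _ _ hx hy; simp [Ring.lie_def, hx, hy]

lemma ad_eq {l : A} (hl : l ∈ L) :
    adA l = LinearMap.mulLeft ℝ (incL l) - LinearMap.mulRight ℝ (incR l) := by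
  have hl' : l ∈ LieSubalgebra.lieSpan ℝ A {X, Y} := hl
  refine LieSubalgebra.lieSpan_induction (R := ℝ)
    (p := fun x _ => adA x = LinearMap.mulLeft ℝ (incL x) - LinearMap.mulRight ℝ (incR x))
    (hx := hl') ?_ ?_ ?_ ?_ ?_
  · rintro x (h | h) <;> subst h <;> simp [X, Y, adA]
  · show adA 0 = _
    rw [map_zero, map_zero, map_zero]
    ext m
    simp
  · intro x y _ _ hx hy
    show adA (x + y) = _
    ext m
    simp [hx, hy, add_mul, mul_add, TensorProduct.add_tmul, TensorProduct.tmul_add]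
    abel
  · intro r x _ hx
    show adA (r • x) = _
    ext m
    simp [hx, mul_smul_comm, smul_mul_assoc, smul_sub]
  · intro x y _ _ hx hy
    show adA ⁅x, y⁆ = _
    ext m
    simp [Ring.lie_def, hx, hy, Module.End.mul_apply, sub_mul, mul_sub, mul_assoc,
      TensorProduct.add_tmul, TensorProduct.tmul_add, TensorProduct.smul_tmul,
      TensorProduct.tmul_smul, TensorProduct.sub_tmul, TensorProduct.tmul_sub]
    abel


/-- For every Lie element `l ∈ L`, `∂_x(l) = ad_{∂_x^L(l)}(1 ⊗ 1)`. -/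
theorem pd_eq_ad_of_lie (l : A) (hl : l ∈ L) :
    pd 0 l = adA (pdL 0 l) 1 := by
  have key : ∀ l ∈ L, l ∈ L ∧ pd 0 l = adA (pdL 0 l) 1 := by
    intro l hl
    have hl' : l ∈ LieSubalgebra.lieSpan ℝ A {X, Y} := hl
    refine LieSubalgebra.lieSpan_induction (R := ℝ)
      (p := fun x _ => x ∈ L ∧ pd 0 x = adA (pdL 0 x) 1) (hx := hl') ?_ ?_ ?_ ?_ ?_
    · intro x hx
      refine ⟨LieSubalgebra.subset_lieSpan hx, ?_⟩
      rcases hx with h | h <;> subst h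
      · have h1 : pd 0 X = 1 := by simp [pd, Φmat, X, genMat]
        have h2 : pdL 0 X = 1 := by
          rw [pdL_eq, h1]
          simp [F, Algebra.TensorProduct.one_def]
        rw [h1, h2]; simp
      · have h1 : pd 0 Y = 0 := by simp [pd, Φmat, Y, genMat]
        have h2 : pdL 0 Y = 0 := by rw [pdL_eq, h1]; simp
        rw [h1, h2]; simp
    · refine ⟨L.zero_mem, ?_⟩
      have h1 : pd 0 (0 : A) = 0 := by simp [pd]
      have h2 : pdL 0 (0 : A) = 0 := by rw [pdL_eq, h1, map_zero]
      rw [h1, h2, map_zero]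
      simp
    · intro x y _ _ hx hy
      refine ⟨L.add_mem hx.1 hy.1, ?_⟩
      have h1 : pd 0 (x + y) = pd 0 x + pd 0 y := by simp [pd]
      have h2 : pdL 0 (x + y) = pdL 0 x + pdL 0 y := by
        rw [pdL_eq, h1, map_add, pdL_eq, pdL_eq]
      rw [h1, h2, hx.2, hy.2]
      simp
    · intro r x _ hx
      refine ⟨L.smul_mem r hx.1, ?_⟩
      have : pd 0 (r • x) = r • pd 0 x := by simp [pd]
      rw [this, hx.2]
      have hp : pd 0 (r • x) = r • pd 0 x := by simp [pd]
      have : pdL 0 (r • x) = r • pdL 0 x := by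
        rw [pdL_eq, hp, map_smul, pdL_eq]
      rw [this]
      simp
    · intro x y _ _ hx hy
      obtain ⟨hxL, hxe⟩ := hx
      obtain ⟨hyL, hye⟩ := hy
      refine ⟨L.lie_mem hxL hyL, ?_⟩
      have hεx : εR x = 0 := eps_lie hxL
      have hεy : εR y = 0 := eps_lie hyL
      have hpd : pd 0 ⁅x, y⁆ =
          incL x * pd 0 y + pd 0 x * incR y - (incL y * pd 0 x + pd 0 y * incR x) := by
        rw [Ring.lie_def]
        have : pd 0 (x * y - y * x) = pd 0 (x * y) - pd 0 (y * x) := by simp [pd]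
        rw [this, pd_mul, pd_mul]
      have hpdL : pdL 0 ⁅x, y⁆ = x * pdL 0 y - y * pdL 0 x := by
        rw [Ring.lie_def]
        have hps : pd 0 (x * y - y * x) = pd 0 (x * y) - pd 0 (y * x) := by simp [pd]
        have : pdL 0 (x * y - y * x) = pdL 0 (x * y) - pdL 0 (y * x) := by
          rw [pdL_eq, hps, map_sub, pdL_eq, pdL_eq]
        rw [this, pdL_mul, pdL_mul, hεx, hεy]
        simp
      rw [hpd, hpdL, map_sub, map_mul, map_mul]
      have hax := ad_eq hxL
      have hay := ad_eq hyL
      simp only [LinearMap.sub_apply, Module.End.mul_apply, hxe, hye, hax, hay,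
        LinearMap.mulLeft_apply, LinearMap.mulRight_apply]
      abel
  exact (key l hl).2
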